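/- Let H ∈ R^{m×m} be symmetric positive definite, let m ≤ n, and let W ∈ R^{m×n} have orthonormal rows, i.e. W Wᵀ = I_m. Then whitening fixes the gradient direction: (H W (H W)ᵀ)^{-1/2} (H W) = W; moreover the Schatten 1-norm satisfies ‖H W‖₁ = Tr(H). -/

import Mathlib

open Matrix

open Classical in
/-- The unique positive semidefinite square root of a positive semidefinite matrix
(junk value `0` if `A` is not positive semidefinite). -/
noncomputable def matSqrt {m : ℕ} (A : Matrix (Fin m) (Fin m) ℝ) : Matrix (Fin m) (Fin m) ℝ :=
  if h : A.PosSemidef then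
    h.1.eigenvectorUnitary.1 * diagonal (Real.sqrt ∘ h.1.eigenvalues) *
      (star h.1.eigenvectorUnitary : Matrix (Fin m) (Fin m) ℝ)
  else 0

/-- The GradWhitening operator `A ↦ (A Aᵀ)^{-1/2} A`. -/
noncomputable def whiten {m n : ℕ} (A : Matrix (Fin m) (Fin n) ℝ) : Matrix (Fin m) (Fin n) ℝ :=
  (matSqrt (A * Aᵀ))⁻¹ * A

/-- The Schatten 1-norm (sum of singular values): `‖A‖₁ = Tr((A Aᵀ)^{1/2})`. -/
noncomputable def schattenOne {m n : ℕ} (A : Matrix (Fin m) (Fin n) ℝ) : ℝ :=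
  (matSqrt (A * Aᵀ)).trace

/-- The quadratic loss `L(W) = (1/2) * Tr(Wᵀ H W)`. -/
noncomputable def loss {m n : ℕ} (H : Matrix (Fin m) (Fin m) ℝ)
    (W : Matrix (Fin m) (Fin n) ℝ) : ℝ :=
  (1 / 2) * (Wᵀ * H * W).trace

/-- If `W` has orthonormal rows then whitening fixes the gradient direction:
`(H W (H W)ᵀ)^{-1/2} (H W) = W`, and `‖H W‖₁ = Tr(H)`. -/
theorem whiten_of_orthonormal_rows {m n : ℕ} (hmn : m ≤ n)
    (H : Matrix (Fin m) (Fin m) ℝ) (hH : H.PosDef)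
    (W : Matrix (Fin m) (Fin n) ℝ) (hW : W * Wᵀ = 1) :
    whiten (H * W) = W ∧ schattenOne (H * W) = H.trace := by
  have hHt : Hᵀ = H := hH.isHermitian
  have key : (H * W) * (H * W)ᵀ = H ^ 2 := by
    rw [transpose_mul, hHt, Matrix.mul_assoc, ← Matrix.mul_assoc W, hW, one_mul, pow_two]
  have hps : ((H * W) * (H * W)ᵀ).PosSemidef := by
    rw [key]; exact hH.posSemidef.pow 2
  have hs : matSqrt ((H * W) * (H * W)ᵀ) = H := by
    rw [matSqrt, dif_pos hps]
    open scoped MatrixOrder in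
    have e : hps.1.eigenvectorUnitary.1 * diagonal (Real.sqrt ∘ hps.1.eigenvalues) *
        (star hps.1.eigenvectorUnitary : Matrix (Fin m) (Fin m) ℝ) =
        cfc Real.sqrt ((H * W) * (H * W)ᵀ) := by
      rw [hps.1.cfc_eq, IsHermitian.cfc, Unitary.conjStarAlgAut_apply]
      simp [Function.comp_def]
    open scoped MatrixOrder in
    rw [e, ← cfcₙ_eq_cfc, ← CFC.sqrt_eq_real_sqrt _ hps.nonneg]
    open scoped MatrixOrder in
    exact CFC.sqrt_unique (by rw [key, pow_two]) hH.posSemidef.nonneg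
  constructor
  · rw [whiten, hs, ← Matrix.mul_assoc, nonsing_inv_mul _ hH.det_pos.ne'.isUnit, Matrix.one_mul]
  · rw [schattenOne, hs]
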